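/- Let Θ : [0,π] → ℝ be continuous with Θ(θ) ≥ 0 for all θ ∈ [0,π]. Let L ∈ (0,π], m ≥ 0, E ∈ ℝ, and let 0 ≤ l₁ ≤ l₂ ≤ L. Assume Θ(θ) ≤ θ for all θ ∈ [0,L], Θ(θ) ≤ θ − m for all θ ∈ [l₁, l₂], and ∫₀^π max(L − Θ(θ), 0)·sin θ dθ ≤ ∫₀^π max(L − θ, 0)·sin θ dθ + E. Then m·(cos l₁ − cos l₂) ≤ E. -/

import Mathlib

open Real Set

/-- Key integral estimate in the proof of the quantitative Otal lemma, obtained by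
testing the convexity inequality against the convex function `x ↦ max (L - x) 0`. -/
theorem otal_integral_estimate
    (Θ : ℝ → ℝ)
    (hcont : ContinuousOn Θ (Set.Icc 0 π))
    (hnonneg : ∀ θ ∈ Set.Icc 0 π, 0 ≤ Θ θ)
    (L m E l₁ l₂ : ℝ)
    (hL : L ∈ Set.Ioc 0 π) (hm : 0 ≤ m)
    (hl₁ : 0 ≤ l₁) (hl₁₂ : l₁ ≤ l₂) (hl₂ : l₂ ≤ L)
    (hle : ∀ θ ∈ Set.Icc 0 L, Θ θ ≤ θ)
    (hlt : ∀ θ ∈ Set.Icc l₁ l₂, Θ θ ≤ θ - m)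
    (hint : ∫ θ in (0 : ℝ)..π, max (L - Θ θ) 0 * Real.sin θ ≤
      (∫ θ in (0 : ℝ)..π, max (L - θ) 0 * Real.sin θ) + E) :
    m * (Real.cos l₁ - Real.cos l₂) ≤ E := by
  have h0π : (0 : ℝ) ≤ π := Real.pi_pos.le
  have hl₂π : l₂ ≤ π := hl₂.trans hL.2
  have hl₁π : l₁ ≤ π := hl₁₂.trans hl₂π
  set F₁ : ℝ → ℝ := fun θ => max (L - Θ θ) 0 * Real.sin θ with hF₁
  set F₂ : ℝ → ℝ := fun θ => max (L - θ) 0 * Real.sin θ with hF₂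
  have hcontF₁ : ContinuousOn F₁ (Set.Icc 0 π) :=
    (((continuousOn_const.sub hcont).sup continuousOn_const)).mul
      Real.continuous_sin.continuousOn
  have hcontF₂ : Continuous F₂ :=
    (((continuous_const.sub continuous_id).max continuous_const)).mul Real.continuous_sin
  have hIF₁ : ∀ a b : ℝ, 0 ≤ a → a ≤ b → b ≤ π →
      IntervalIntegrable F₁ MeasureTheory.volume a b := by
    intro a b ha hab hb
    apply ContinuousOn.intervalIntegrable
    rw [Set.uIcc_of_le hab]
    exact hcontF₁.mono (Set.Icc_subset_Icc ha hb)
  have hIF₂ : ∀ a b : ℝ, IntervalIntegrable F₂ MeasureTheory.volume a b := fun a b =>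
    hcontF₂.intervalIntegrable a b
  -- pointwise inequality : F₂ ≤ F₁ on [0, π]
  have hpt : ∀ θ ∈ Set.Icc (0:ℝ) π, F₂ θ ≤ F₁ θ := by
    intro θ hθ
    have hsin : 0 ≤ Real.sin θ := Real.sin_nonneg_of_nonneg_of_le_pi hθ.1 hθ.2
    apply mul_le_mul_of_nonneg_right _ hsin
    rcases le_or_gt θ L with h | h
    · exact max_le_max (sub_le_sub_left (hle θ ⟨hθ.1, h⟩) L) le_rfl
    · have : max (L - θ) 0 = 0 := max_eq_right (by linarith)
      rw [this]
      exact le_max_right _ _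
  -- the middle interval: F₁ - F₂ ≥ m * sin θ on [l₁, l₂]
  have key : m * (Real.cos l₁ - Real.cos l₂) ≤ ∫ θ in (0:ℝ)..π, (F₁ θ - F₂ θ) := by
    have hsub1 : IntervalIntegrable (fun θ => F₁ θ - F₂ θ) MeasureTheory.volume 0 l₁ :=
      (hIF₁ 0 l₁ le_rfl hl₁ hl₁π).sub (hIF₂ 0 l₁)
    have hsub2 : IntervalIntegrable (fun θ => F₁ θ - F₂ θ) MeasureTheory.volume l₁ l₂ :=
      (hIF₁ l₁ l₂ hl₁ hl₁₂ hl₂π).sub (hIF₂ l₁ l₂)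
    have hsub3 : IntervalIntegrable (fun θ => F₁ θ - F₂ θ) MeasureTheory.volume l₂ π :=
      (hIF₁ l₂ π (hl₁.trans hl₁₂) hl₂π le_rfl).sub (hIF₂ l₂ π)
    have hsplit : (∫ θ in (0:ℝ)..π, (F₁ θ - F₂ θ)) =
        (∫ θ in (0:ℝ)..l₁, (F₁ θ - F₂ θ)) + (∫ θ in l₁..l₂, (F₁ θ - F₂ θ)) +
          (∫ θ in l₂..π, (F₁ θ - F₂ θ)) := by
      rw [← intervalIntegral.integral_add_adjacent_intervals (hsub1.trans hsub2) hsub3,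
        ← intervalIntegral.integral_add_adjacent_intervals hsub1 hsub2]
    have h1 : 0 ≤ ∫ θ in (0:ℝ)..l₁, (F₁ θ - F₂ θ) := by
      apply intervalIntegral.integral_nonneg hl₁
      intro θ hθ
      have := hpt θ ⟨hθ.1, hθ.2.trans hl₁π⟩
      linarith
    have h3 : 0 ≤ ∫ θ in l₂..π, (F₁ θ - F₂ θ) := by
      apply intervalIntegral.integral_nonneg hl₂π
      intro θ hθ
      have := hpt θ ⟨(hl₁.trans (hl₁₂.trans hθ.1)), hθ.2⟩
      linarith
    have h2 : m * (Real.cos l₁ - Real.cos l₂) ≤ ∫ θ in l₁..l₂, (F₁ θ - F₂ θ) := by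
      have heq : (∫ θ in l₁..l₂, m * Real.sin θ) = m * (Real.cos l₁ - Real.cos l₂) := by
        rw [intervalIntegral.integral_const_mul, integral_sin]
      rw [← heq]
      apply intervalIntegral.integral_mono_on hl₁₂
        ((continuous_const.mul Real.continuous_sin).intervalIntegrable l₁ l₂) hsub2
      intro θ hθ
      have hθ0 : 0 ≤ θ := hl₁.trans hθ.1
      have hθπ : θ ≤ π := hθ.2.trans hl₂π
      have hθL : θ ≤ L := hθ.2.trans hl₂
      have hsin : 0 ≤ Real.sin θ := Real.sin_nonneg_of_nonneg_of_le_pi hθ0 hθπ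
      have hΘ : Θ θ ≤ θ - m := hlt θ hθ
      have hmax1 : L - θ + m ≤ max (L - Θ θ) 0 := le_max_of_le_left (by linarith)
      have hmax2 : max (L - θ) 0 = L - θ := max_eq_left (by linarith)
      simp only [hF₁, hF₂, hmax2, Pi.mul_apply]
      nlinarith [mul_le_mul_of_nonneg_right hmax1 hsin]
    linarith
  have heqsub : (∫ θ in (0:ℝ)..π, (F₁ θ - F₂ θ)) =
      (∫ θ in (0:ℝ)..π, F₁ θ) - (∫ θ in (0:ℝ)..π, F₂ θ) :=
    intervalIntegral.integral_sub (hIF₁ 0 π le_rfl h0π le_rfl) (hIF₂ 0 π)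
  rw [heqsub] at key
  linarith [hint]
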